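/- arXiv:1305.2545 — 4 statements merged into one kernel-verified Lean document; each statement's English description precedes it below -/
import Mathlib

section
/- If 0 < ε, 0 < p, ε/p ≤ 1/2 and p ≤ 1/2, then p·ln(p/(p−ε)) + (1−p)·ln((1−p)/(1−p+ε)) ≤ 2ε²/p. -/
/-- For `0 ≤ x ≤ 1/2`, `log (1 - x) ≥ -(x + x²)`. -/
lemma log_one_sub_ge_aux (x : ℝ) (hx : 0 ≤ x) (hx2 : x ≤ 1 / 2) :
    -(x + x ^ 2) ≤ Real.log (1 - x) := by
  have h1 : (0:ℝ) < 1 - x := by linarith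
  rw [Real.le_log_iff_exp_le h1]
  have ht : 0 ≤ x + x ^ 2 := by positivity
  have hsum := Real.sum_le_exp_of_nonneg ht 4
  have hs : (1:ℝ) + (x + x ^ 2) + (x + x ^ 2) ^ 2 / 2 + (x + x ^ 2) ^ 3 / 6
      ≤ Real.exp (x + x ^ 2) := by
    have : ∑ i ∈ Finset.range 4, (x + x ^ 2) ^ i / (Nat.factorial i)
        = (1:ℝ) + (x + x ^ 2) + (x + x ^ 2) ^ 2 / 2 + (x + x ^ 2) ^ 3 / 6 := by
      norm_num [Finset.sum_range_succ, Nat.factorial]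
    linarith [this ▸ hsum]
  rw [Real.exp_neg]
  rw [inv_le_comm₀ (Real.exp_pos _) h1] at *
  calc (1 - x)⁻¹ ≤ (1:ℝ) + (x + x ^ 2) + (x + x ^ 2) ^ 2 / 2 + (x + x ^ 2) ^ 3 / 6 := by
        rw [inv_le_iff_one_le_mul₀ h1]
        have h3 : x ^ 3 ≤ x ^ 2 * (1 / 2) := by nlinarith
        have h4 : x ^ 4 ≤ x ^ 2 * (1 / 4) := by nlinarith
        have h5 : x ^ 5 ≤ x ^ 2 * (1 / 8) := by nlinarith
        have h6 : x ^ 6 ≤ x ^ 2 * (1 / 16) := by nlinarith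
        have h7 : x ^ 7 ≤ x ^ 2 * (1 / 32) := by nlinarith
        nlinarith [sq_nonneg x]
    _ ≤ Real.exp (x + x ^ 2) := hs

/-- KL-divergence bound between Bernoulli-type means `p - ε` and `p`. -/
theorem kl_bernoulli_bound (p ε : ℝ) (hε : 0 < ε) (hp : 0 < p)
    (hratio : ε / p ≤ 1 / 2) (hp2 : p ≤ 1 / 2) :
    p * Real.log (p / (p - ε)) + (1 - p) * Real.log ((1 - p) / (1 - p + ε))
      ≤ 2 * ε ^ 2 / p := by
  have hεp : ε ≤ p / 2 := by
    rw [div_le_iff₀ hp] at hratio; linarith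
  have hpε : 0 < p - ε := by linarith
  have hq : (0:ℝ) < 1 - p := by linarith
  have hqε : (0:ℝ) < 1 - p + ε := by linarith
  -- First term: p * log (p / (p-ε)) = -p * log ((p-ε)/p) ≤ p * (x + x²) with x = ε/p
  set x := ε / p with hxdef
  have hx0 : 0 ≤ x := by positivity
  have hx12 : x ≤ 1 / 2 := hratio
  have hlog1 : Real.log (p / (p - ε)) ≤ x + x ^ 2 := by
    have h1 : p / (p - ε) = ((p - ε) / p)⁻¹ := by
      rw [inv_div]
    have h2 : (p - ε) / p = 1 - x := by
      rw [hxdef]; field_simp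
    rw [h1, Real.log_inv, h2]
    linarith [log_one_sub_ge_aux x hx0 hx12]
  -- Second term: log ((1-p)/(1-p+ε)) ≤ -ε/(1-p+ε) via log z ≥ 1 - 1/z
  have hlog2 : Real.log ((1 - p) / (1 - p + ε)) ≤ -(ε / (1 - p + ε)) := by
    have h := Real.log_le_sub_one_of_pos (show (0:ℝ) < (1 - p) / (1 - p + ε) by positivity)
    have : (1 - p) / (1 - p + ε) - 1 = -(ε / (1 - p + ε)) := by
      field_simp; ring
    linarith [this ▸ h]
  have hb1 : p * Real.log (p / (p - ε)) ≤ ε + ε ^ 2 / p := by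
    have := mul_le_mul_of_nonneg_left hlog1 hp.le
    have hx : p * (x + x ^ 2) = ε + ε ^ 2 / p := by
      rw [hxdef]; field_simp
    linarith [hx ▸ this]
  have hb2 : (1 - p) * Real.log ((1 - p) / (1 - p + ε)) ≤ -ε + 2 * ε ^ 2 := by
    have h := mul_le_mul_of_nonneg_left hlog2 hq.le
    have key : (1 - p) * (-(ε / (1 - p + ε))) ≤ -ε + 2 * ε ^ 2 := by
      rw [mul_neg, neg_le_iff_add_nonneg]
      have hexp : -ε + 2 * ε ^ 2 + (1 - p) * (ε / (1 - p + ε))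
          = (2 * ε ^ 2 * (1 - p + ε) - ε ^ 2) / (1 - p + ε) := by
        field_simp; ring
      rw [hexp]
      apply div_nonneg _ hqε.le
      nlinarith
    linarith
  have h2e : 2 * ε ^ 2 ≤ ε ^ 2 / p := by
    rw [le_div_iff₀ hp]; nlinarith
  have hsplit : 2 * ε ^ 2 / p = ε ^ 2 / p + ε ^ 2 / p := by ring
  linarith
end

section
/- Define rad(ν,N) = √(C·ν/N) + C/N with C > 0. If ν, ν̂ ∈ [0,1] satisfy |ν − ν̂| ≤ rad(ν̂, N), then rad(ν̂, N) ≤ 3·rad(ν, N). -/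
noncomputable def rad (C ν N : ℝ) : ℝ := Real.sqrt (C * ν / N) + C / N

/-- If `|ν − ν̂| ≤ rad(ν̂,N)` for `ν, ν̂ ∈ [0,1]` then `rad(ν̂,N) ≤ 3·rad(ν,N)`. -/
theorem rad_comparison (C : ℝ) (hC : 0 < C) (N : ℝ) (hN : 0 < N)
    (ν νhat : ℝ) (hν : ν ∈ Set.Icc (0:ℝ) 1) (hνhat : νhat ∈ Set.Icc (0:ℝ) 1)
    (h : |ν - νhat| ≤ rad C νhat N) :
    rad C νhat N ≤ 3 * rad C ν N := by
  obtain ⟨hν0, hν1⟩ := hν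
  obtain ⟨hh0, hh1⟩ := hνhat
  set s := Real.sqrt (C * νhat / N) with hs
  set t := Real.sqrt (C * ν / N) with ht
  have hb : 0 < C / N := div_pos hC hN
  have hs0 : 0 ≤ s := Real.sqrt_nonneg _
  have ht0 : 0 ≤ t := Real.sqrt_nonneg _
  have hs2 : s ^ 2 = C * νhat / N := by
    rw [hs, Real.sq_sqrt (by positivity)]
  have ht2 : t ^ 2 = C * ν / N := by
    rw [ht, Real.sq_sqrt (by positivity)]
  rw [abs_le] at h
  have h1 : νhat - ν ≤ s + C / N := by
    have := h.1
    simp only [rad] at this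
    linarith
  -- multiply by C/N
  have h2 : s ^ 2 ≤ t ^ 2 + (C / N) * (s + C / N) := by
    rw [hs2, ht2]
    have key := mul_le_mul_of_nonneg_left h1 hb.le
    have e1 : C * νhat / N - C * ν / N = C / N * (νhat - ν) := by ring
    linarith [key, e1]
  simp only [rad]
  have : s ≤ 3 * t + 2 * (C / N) := by
    nlinarith [sq_nonneg (s - t), sq_nonneg (s + t), sq_nonneg (s - 2 * (C/N)), mul_nonneg hs0 ht0, mul_nonneg ht0 hb.le]
  linarith
end

section
/- Consider the linear program: maximize ∑_{x∈X} ξ_x r(x) subject to ∑_{x∈X} ξ_x c_i(x) ≤ B for each resource i ∈ {1,…,d} and ξ_x ≥ 0, where X is finite, r(x) ∈ [0,1], c_i(x) ∈ [0,1], B > 0, and some resource i₀ satisfies c_{i₀}(x) = B/T for all x (the time resource), with T ≥ B. Then the optimal value of this LP equals sup over probability distributions D on X of LP(D) := r(D)·min_i (B / c_i(D)), where r(D) = ∑_x D(x) r(x) and c_i(D) = ∑_x D(x) c_i(x) (with the convention B/0 = T via the time-resource constraint). -/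
open Finset

/-- The optimal value of the primal LP equals the supremum over probability distributions `D`
of `LP(D) = r(D) · min_i (B / c_i(D))`, where the time resource `i₀` has `c_{i₀}(x) = B/T`
(so the minimum is at most `T`; resources with zero consumption contribute `T` by convention). -/
theorem lp_primal_eq_sup_over_distributions
    {X : Type*} [Fintype X] [Nonempty X] (d : ℕ)
    (r : X → ℝ) (c : Fin d → X → ℝ)
    (hr : ∀ x, r x ∈ Set.Icc (0:ℝ) 1) (hc : ∀ i x, c i x ∈ Set.Icc (0:ℝ) 1)
    (B T : ℝ) (hB : 0 < B) (hT : B ≤ T)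
    (i₀ : Fin d) (hi₀ : ∀ x, c i₀ x = B / T) :
    sSup {v : ℝ | ∃ ξ : X → ℝ, (∀ x, 0 ≤ ξ x) ∧ (∀ i, ∑ x, ξ x * c i x ≤ B) ∧
        v = ∑ x, ξ x * r x}
      = sSup {v : ℝ | ∃ D : X → ℝ, (∀ x, 0 ≤ D x) ∧ (∑ x, D x = 1) ∧
        v = (∑ x, D x * r x) *
          Finset.univ.inf' ⟨i₀, Finset.mem_univ i₀⟩
            (fun i : Fin d =>
              if (∑ x, D x * c i x) = 0 then T else B / ∑ x, D x * c i x)} := by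
  classical
  have hT0 : 0 < T := lt_of_lt_of_le hB hT
  have hBT : 0 < B / T := div_pos hB hT0
  set A := {v : ℝ | ∃ ξ : X → ℝ, (∀ x, 0 ≤ ξ x) ∧ (∀ i, ∑ x, ξ x * c i x ≤ B) ∧
        v = ∑ x, ξ x * r x} with hAdef
  set S := {v : ℝ | ∃ D : X → ℝ, (∀ x, 0 ≤ D x) ∧ (∑ x, D x = 1) ∧
        v = (∑ x, D x * r x) *
          Finset.univ.inf' ⟨i₀, Finset.mem_univ i₀⟩
            (fun i : Fin d =>
              if (∑ x, D x * c i x) = 0 then T else B / ∑ x, D x * c i x)} with hSdef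
  -- positivity of each candidate term
  have hφ_pos : ∀ (D : X → ℝ), (∀ x, 0 ≤ D x) → ∀ i : Fin d,
      0 < (if (∑ x, D x * c i x) = 0 then T else B / ∑ x, D x * c i x) := by
    intro D hD0 i
    split_ifs with h
    · exact hT0
    · have hnn : 0 ≤ ∑ x, D x * c i x :=
        Finset.sum_nonneg fun x _ => mul_nonneg (hD0 x) (hc i x).1
      exact div_pos hB (lt_of_le_of_ne hnn (Ne.symm h))
  -- the time coordinate
  have hci₀ : ∀ (D : X → ℝ), (∑ x, D x = 1) → ∑ x, D x * c i₀ x = B / T := by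
    intro D hD1
    simp only [hi₀]
    rw [← Finset.sum_mul, hD1, one_mul]
  have hBoverBT : B / (B / T) = T := by
    field_simp
  -- sums of ξ are bounded by T
  have hsumT : ∀ (ξ : X → ℝ), (∀ i, ∑ x, ξ x * c i x ≤ B) → ∑ x, ξ x ≤ T := by
    intro ξ hcon
    have h := hcon i₀
    simp only [hi₀] at h
    rw [← Finset.sum_mul] at h
    have := (le_div_iff₀ hBT).mpr h
    rwa [hBoverBT] at this
  -- bounded above
  have hAbdd : BddAbove A := by
    refine ⟨T, ?_⟩
    rintro v ⟨ξ, hξ0, hcon, rfl⟩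
    calc ∑ x, ξ x * r x ≤ ∑ x, ξ x * 1 :=
          Finset.sum_le_sum fun x _ => mul_le_mul_of_nonneg_left (hr x).2 (hξ0 x)
      _ = ∑ x, ξ x := by simp
      _ ≤ T := hsumT ξ hcon
  have hSbdd : BddAbove S := by
    refine ⟨T, ?_⟩
    rintro v ⟨D, hD0, hD1, rfl⟩
    have hrD0 : 0 ≤ ∑ x, D x * r x :=
      Finset.sum_nonneg fun x _ => mul_nonneg (hD0 x) (hr x).1
    have hrD1 : ∑ x, D x * r x ≤ 1 := by
      calc ∑ x, D x * r x ≤ ∑ x, D x * 1 :=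
            Finset.sum_le_sum fun x _ => mul_le_mul_of_nonneg_left (hr x).2 (hD0 x)
        _ = 1 := by simp [hD1]
    have hm0 : 0 ≤ Finset.univ.inf' ⟨i₀, Finset.mem_univ i₀⟩
        (fun i : Fin d => if (∑ x, D x * c i x) = 0 then T else B / ∑ x, D x * c i x) :=
      le_of_lt (Finset.lt_inf'_iff _ |>.mpr fun i _ => hφ_pos D hD0 i)
    have hmT : Finset.univ.inf' ⟨i₀, Finset.mem_univ i₀⟩
        (fun i : Fin d => if (∑ x, D x * c i x) = 0 then T else B / ∑ x, D x * c i x) ≤ T := by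
      have hle := Finset.inf'_le (b := i₀)
        (f := fun i : Fin d => if (∑ x, D x * c i x) = 0 then T else B / ∑ x, D x * c i x)
        (Finset.mem_univ i₀)
      rw [hci₀ D hD1] at hle
      simp only [ne_of_gt hBT, if_neg (ne_of_gt hBT)] at hle
      rwa [hBoverBT] at hle
    calc (∑ x, D x * r x) * _ ≤ 1 * T := mul_le_mul hrD1 hmT hm0 one_pos.le
      _ = T := one_mul T
  -- every distribution yields a member of S
  have hmemS : ∀ (D : X → ℝ), (∀ x, 0 ≤ D x) → (∑ x, D x = 1) →
      (∑ x, D x * r x) *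
        Finset.univ.inf' ⟨i₀, Finset.mem_univ i₀⟩
          (fun i : Fin d => if (∑ x, D x * c i x) = 0 then T else B / ∑ x, D x * c i x) ∈ S :=
    fun D hD0 hD1 => ⟨D, hD0, hD1, rfl⟩
  -- sSup S is nonnegative
  have hSpos : 0 ≤ sSup S := by
    obtain ⟨x₀⟩ := (inferInstance : Nonempty X)
    set D : X → ℝ := fun x => if x = x₀ then 1 else 0 with hD
    have hD0 : ∀ x, 0 ≤ D x := by intro x; simp only [hD]; split_ifs <;> norm_num
    have hD1 : ∑ x, D x = 1 := by simp [hD]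
    refine le_trans ?_ (le_csSup hSbdd (hmemS D hD0 hD1))
    have hrD0 : 0 ≤ ∑ x, D x * r x :=
      Finset.sum_nonneg fun x _ => mul_nonneg (hD0 x) (hr x).1
    have hm0 : 0 ≤ Finset.univ.inf' ⟨i₀, Finset.mem_univ i₀⟩
        (fun i : Fin d => if (∑ x, D x * c i x) = 0 then T else B / ∑ x, D x * c i x) :=
      le_of_lt (Finset.lt_inf'_iff _ |>.mpr fun i _ => hφ_pos D hD0 i)
    exact mul_nonneg hrD0 hm0
  have hApos : 0 ≤ sSup A := by
    refine le_csSup hAbdd ?_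
    exact ⟨fun _ => 0, fun x => le_refl 0, fun i => by simp [hB.le], by simp⟩
  apply le_antisymm
  · -- sSup A ≤ sSup S
    refine Real.sSup_le ?_ hSpos
    rintro v ⟨ξ, hξ0, hcon, rfl⟩
    rcases eq_or_lt_of_le (Finset.sum_nonneg fun x _ => hξ0 x : (0:ℝ) ≤ ∑ x, ξ x) with hs | hs
    · -- ξ is identically zero
      have hz : ∀ x ∈ Finset.univ, ξ x = 0 :=
        (Finset.sum_eq_zero_iff_of_nonneg fun x _ => hξ0 x).mp hs.symm
      have : ∑ x, ξ x * r x = 0 :=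
        Finset.sum_eq_zero fun x hx => by rw [hz x hx, zero_mul]
      rw [this]; exact hSpos
    · set s := ∑ x, ξ x with hs_def
      set D : X → ℝ := fun x => ξ x / s with hD
      have hD0 : ∀ x, 0 ≤ D x := fun x => div_nonneg (hξ0 x) hs.le
      have hD1 : ∑ x, D x = 1 := by
        simp only [hD]
        rw [← Finset.sum_div, div_self (ne_of_gt hs)]
      have hcD : ∀ i, ∑ x, D x * c i x = (∑ x, ξ x * c i x) / s := by
        intro i
        rw [Finset.sum_div]
        exact Finset.sum_congr rfl fun x _ => by rw [hD, div_mul_eq_mul_div]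
      have hrD : ∑ x, D x * r x = (∑ x, ξ x * r x) / s := by
        rw [Finset.sum_div]
        exact Finset.sum_congr rfl fun x _ => by rw [hD, div_mul_eq_mul_div]
      have hmin_ge : s ≤ Finset.univ.inf' ⟨i₀, Finset.mem_univ i₀⟩
          (fun i : Fin d => if (∑ x, D x * c i x) = 0 then T else B / ∑ x, D x * c i x) := by
        refine Finset.le_inf' _ _ fun i _ => ?_
        split_ifs with h
        · exact hsumT ξ hcon
        · rw [hcD i] at h ⊢
          have hq0 : 0 ≤ (∑ x, ξ x * c i x) / s :=
            div_nonneg (Finset.sum_nonneg fun x _ =>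
              mul_nonneg (hξ0 x) (hc i x).1) hs.le
          have hq : 0 < (∑ x, ξ x * c i x) / s := lt_of_le_of_ne hq0 (Ne.symm h)
          rw [le_div_iff₀ hq]
          have : s * ((∑ x, ξ x * c i x) / s) = ∑ x, ξ x * c i x := by
            field_simp
          rw [this]
          exact hcon i
      have hrDnn : 0 ≤ ∑ x, D x * r x :=
        Finset.sum_nonneg fun x _ => mul_nonneg (hD0 x) (hr x).1
      refine le_trans ?_ (le_csSup hSbdd (hmemS D hD0 hD1))
      have h1 : (∑ x, D x * r x) * s ≤ (∑ x, D x * r x) *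
          Finset.univ.inf' ⟨i₀, Finset.mem_univ i₀⟩
            (fun i : Fin d => if (∑ x, D x * c i x) = 0 then T else B / ∑ x, D x * c i x) :=
        mul_le_mul_of_nonneg_left hmin_ge hrDnn
      have h2 : (∑ x, D x * r x) * s = ∑ x, ξ x * r x := by
        rw [hrD, div_mul_cancel₀ _ (ne_of_gt hs)]
      linarith
  · -- sSup S ≤ sSup A
    refine Real.sSup_le ?_ hApos
    rintro v ⟨D, hD0, hD1, rfl⟩
    set m := Finset.univ.inf' ⟨i₀, Finset.mem_univ i₀⟩
      (fun i : Fin d => if (∑ x, D x * c i x) = 0 then T else B / ∑ x, D x * c i x) with hm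
    have hm0 : 0 ≤ m :=
      le_of_lt (Finset.lt_inf'_iff _ |>.mpr fun i _ => hφ_pos D hD0 i)
    refine le_csSup hAbdd ?_
    refine ⟨fun x => m * D x, fun x => mul_nonneg hm0 (hD0 x), fun i => ?_, ?_⟩
    · have : ∑ x, (m * D x) * c i x = m * ∑ x, D x * c i x := by
        rw [Finset.mul_sum]
        exact Finset.sum_congr rfl fun x _ => by ring
      rw [this]
      have hle := Finset.inf'_le (b := i)
        (f := fun i : Fin d => if (∑ x, D x * c i x) = 0 then T else B / ∑ x, D x * c i x)
        (Finset.mem_univ i)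
      rw [← hm] at hle
      by_cases h : (∑ x, D x * c i x) = 0
      · rw [h, mul_zero]; exact hB.le
      · rw [if_neg h] at hle
        have hcnn : 0 ≤ ∑ x, D x * c i x :=
          Finset.sum_nonneg fun x _ => mul_nonneg (hD0 x) (hc i x).1
        have hcpos : 0 < ∑ x, D x * c i x := lt_of_le_of_ne hcnn (Ne.symm h)
        exact (le_div_iff₀ hcpos).mp hle
    · rw [mul_comm, Finset.mul_sum]
      exact Finset.sum_congr rfl fun x _ => by ring
end

section
/- In the LP setting above (finite X, rewards r(x) ∈ [0,1], consumptions c_i(x) ∈ [0,1], budgets B, time resource with c_{i₀}(x) = B/T), there exists a probability distribution D over X that attains the LP optimum sup_D LP(D) and additionally satisfies: (a) c_i(D) ≤ B/T for every resource i; (b) the support of D has size at most d. -/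
open Finset

/-- helper: expanding a perturbed sum -/
lemma lp_expand {X : Type*} [Fintype X] (D z f : X → ℝ) (t : ℝ) :
    ∑ x, (D x + t * z x) * f x = ∑ x, D x * f x + t * ∑ x, z x * f x := by
  simp [add_mul, Finset.sum_add_distrib, Finset.mul_sum, mul_assoc]

/-- The exchange step: if an optimal `D` has more support than tight constraints,
we can find another optimal point with strictly smaller support or strictly more
tight constraints. -/
lemma lp_exchange {X : Type*} [Fintype X] {d : ℕ} (r : X → ℝ) (c : Fin d → X → ℝ)
    (b : ℝ) (hb : 0 < b) (i₀ : Fin d) (hi₀ : ∀ x, c i₀ x = b)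
    (D : X → ℝ) (hD0 : ∀ x, 0 ≤ D x) (hD1 : ∑ x, D x = 1)
    (hDc : ∀ i, ∑ x, D x * c i x ≤ b)
    (hopt : ∀ D' : X → ℝ, (∀ x, 0 ≤ D' x) → ∑ x, D' x = 1 →
      (∀ i, ∑ x, D' x * c i x ≤ b) → ∑ x, D' x * r x ≤ ∑ x, D x * r x)
    (hlt : (univ.filter fun i => ∑ x, D x * c i x = b).card <
           (univ.filter fun x => D x ≠ 0).card) :
    ∃ D' : X → ℝ, (∀ x, 0 ≤ D' x) ∧ (∑ x, D' x = 1) ∧ (∀ i, ∑ x, D' x * c i x ≤ b) ∧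
      (∑ x, D' x * r x = ∑ x, D x * r x) ∧
      (((univ.filter fun x => D' x ≠ 0) ⊂ (univ.filter fun x => D x ≠ 0) ∧
        ((univ.filter fun i => ∑ x, D x * c i x = b) ⊆
         (univ.filter fun i => ∑ x, D' x * c i x = b))) ∨
       ((univ.filter fun x => D' x ≠ 0) ⊆ (univ.filter fun x => D x ≠ 0) ∧
        (univ.filter fun i => ∑ x, D x * c i x = b) ⊂
        (univ.filter fun i => ∑ x, D' x * c i x = b))) := by
  classical
  set Sc : Finset X := univ.filter fun x => D x ≠ 0 with hSc
  set Tt : Finset (Fin d) := univ.filter fun i => ∑ x, D x * c i x = b with hTt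
  -- i₀ is tight
  have hi₀T : i₀ ∈ Tt := by
    simp only [hTt, mem_filter, mem_univ, true_and]
    simp [hi₀, ← Finset.sum_mul, hD1]
  -- positive coordinates on the support
  have hDpos : ∀ x ∈ Sc, 0 < D x := by
    intro x hx
    exact (hD0 x).lt_of_ne (Ne.symm (mem_filter.mp hx).2)
  -- the linear map to tight constraints
  let φ : (↥Sc → ℝ) →ₗ[ℝ] (↥Tt → ℝ) :=
    { toFun := fun w i => ∑ x : ↥Sc, w x * c i x
      map_add' := by
        intro u v; funext i; simp [add_mul, Finset.sum_add_distrib]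
      map_smul' := by
        intro a v; funext i; simp [Finset.mul_sum, mul_assoc] }
  have hker : LinearMap.ker φ ≠ ⊥ := by
    apply LinearMap.ker_ne_bot_of_finrank_lt
    simpa [Module.finrank_pi] using hlt
  obtain ⟨w, hwker, hwne⟩ := Submodule.ne_bot_iff _ |>.mp hker
  set z : X → ℝ := fun x => if h : x ∈ Sc then w ⟨x, h⟩ else 0 with hzdef
  have hzout : ∀ x, x ∉ Sc → z x = 0 := fun x hx => dif_neg hx
  have hzker : ∀ i ∈ Tt, ∑ x, z x * c i x = 0 := by
    intro i hi
    have e1 : ∑ x, z x * c i x = ∑ x ∈ Sc, z x * c i x :=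
      (Finset.sum_subset (Finset.subset_univ _)
        (fun x _ hx => by rw [hzout x hx, zero_mul])).symm
    have e2 : ∑ x ∈ Sc, z x * c i x = ∑ x : ↥Sc, w x * c i ↑x := by
      rw [← Finset.sum_coe_sort Sc (fun x => z x * c i x)]
      refine Finset.sum_congr rfl fun x _ => ?_
      simp [hzdef, dif_pos x.2]
    have e3 : φ w = 0 := hwker
    have e4 : φ w ⟨i, hi⟩ = 0 := by rw [e3]; rfl
    rw [e1, e2]; exact e4
  have hzne : z ≠ 0 := by
    obtain ⟨x, hx⟩ := Function.ne_iff.mp hwne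
    intro h
    apply hx
    have : z ↑x = w x := by simp [hzdef, dif_pos x.2]
    rw [← this, h]; rfl
  have hzsum : ∑ x, z x = 0 := by
    have h := hzker i₀ hi₀T
    simp only [hi₀, ← Finset.sum_mul] at h
    rcases mul_eq_zero.mp h with h | h
    · exact h
    · exact absurd h (ne_of_gt hb)
  -- existence of a negative coordinate
  set N : Finset X := univ.filter fun x => z x < 0 with hN
  have hNne : N.Nonempty := by
    by_contra hNe
    apply hzne
    funext x
    have hnn : ∀ y ∈ (univ : Finset X), 0 ≤ z y := by
      intro y _
      by_contra hy
      exact hNe ⟨y, mem_filter.mpr ⟨mem_univ y, lt_of_not_ge hy⟩⟩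
    exact (Finset.sum_eq_zero_iff_of_nonneg hnn).mp hzsum x (mem_univ x)
  have hNS : N ⊆ Sc := by
    intro x hx
    have hzx : z x < 0 := (mem_filter.mp hx).2
    by_contra hxs
    rw [hzout x hxs] at hzx; exact lt_irrefl 0 hzx
  -- small two-sided perturbation to show the reward direction vanishes
  have hScne : Sc.Nonempty := hNne.mono hNS
  set ε₁ : ℝ := Sc.inf' hScne (fun x => D x / (|z x| + 1)) with hε₁
  set ε₂ : ℝ := (univ : Finset (Fin d)).inf' ⟨i₀, mem_univ i₀⟩
    (fun i => if ∑ x, D x * c i x = b then 1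
      else (b - ∑ x, D x * c i x) / (|∑ x, z x * c i x| + 1)) with hε₂
  have hε₁pos : 0 < ε₁ := by
    rw [hε₁, Finset.lt_inf'_iff]
    intro x hx
    exact div_pos (hDpos x hx) (by positivity)
  have hε₂pos : 0 < ε₂ := by
    rw [hε₂]; refine (Finset.lt_inf'_iff _).2 ?_
    intro i _
    by_cases hi : ∑ x, D x * c i x = b
    · simp [hi]
    · rw [if_neg hi]
      exact div_pos (sub_pos.mpr (lt_of_le_of_ne (hDc i) hi)) (by positivity)
  set ε : ℝ := min ε₁ ε₂ with hε
  have hεpos : 0 < ε := lt_min hε₁pos hε₂pos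
  have hfeas : ∀ t : ℝ, |t| ≤ ε → (∀ x, 0 ≤ D x + t * z x) ∧
      (∑ x, (D x + t * z x) = 1) ∧ (∀ i, ∑ x, (D x + t * z x) * c i x ≤ b) := by
    intro t ht
    have htz : ∀ x, |t * z x| ≤ ε * (|z x| + 1) := by
      intro x
      rw [abs_mul]
      calc |t| * |z x| ≤ ε * |z x| :=
            mul_le_mul_of_nonneg_right ht (abs_nonneg _)
        _ ≤ ε * (|z x| + 1) := by nlinarith [hεpos]
    refine ⟨?_, ?_, ?_⟩
    · intro x
      by_cases hx : x ∈ Sc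
      · have h1 : ε ≤ D x / (|z x| + 1) := le_trans (min_le_left _ _) (Finset.inf'_le _ hx)
        have h2 : ε * (|z x| + 1) ≤ D x := by
          rw [← le_div_iff₀ (by positivity)]; exact h1
        have h3 := htz x
        have h4 := neg_abs_le (t * z x)
        linarith
      · rw [hzout x hx]; simpa using hD0 x
    · rw [Finset.sum_add_distrib, ← Finset.mul_sum, hzsum, hD1]; ring
    · intro i
      rw [lp_expand]
      by_cases hi : ∑ x, D x * c i x = b
      · rw [hzker i (mem_filter.mpr ⟨mem_univ i, hi⟩), hi]; simp
      · have h1 : ε ≤ (b - ∑ x, D x * c i x) / (|∑ x, z x * c i x| + 1) := by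
          refine le_trans (min_le_right _ _) ?_
          have := Finset.inf'_le (b := i)
            (f := fun i => if ∑ x, D x * c i x = b then 1
              else (b - ∑ x, D x * c i x) / (|∑ x, z x * c i x| + 1)) (mem_univ i)
          rwa [if_neg hi] at this
        have h2 : ε * (|∑ x, z x * c i x| + 1) ≤ b - ∑ x, D x * c i x := by
          rw [← le_div_iff₀ (by positivity)]; exact h1
        have h3 : t * ∑ x, z x * c i x ≤ |t * ∑ x, z x * c i x| := le_abs_self _
        have h4 : |t * ∑ x, z x * c i x| ≤ ε * (|∑ x, z x * c i x| + 1) := by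
          rw [abs_mul]
          calc |t| * |∑ x, z x * c i x| ≤ ε * |∑ x, z x * c i x| :=
                mul_le_mul_of_nonneg_right ht (abs_nonneg _)
            _ ≤ ε * (|∑ x, z x * c i x| + 1) := by nlinarith [hεpos]
        linarith
  -- reward direction is zero
  have hρ : ∑ x, z x * r x = 0 := by
    have hp := hfeas ε (by rw [abs_of_pos hεpos])
    have hm := hfeas (-ε) (by rw [abs_neg, abs_of_pos hεpos])
    have h1 := hopt _ hp.1 hp.2.1 hp.2.2
    have h2 := hopt _ hm.1 hm.2.1 hm.2.2
    rw [lp_expand] at h1 h2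
    nlinarith [hεpos]
  -- the big move
  set t₁ : ℝ := N.inf' hNne (fun x => D x / (-z x)) with ht₁
  have ht₁pos : 0 < t₁ := by
    rw [ht₁, Finset.lt_inf'_iff]
    intro x hx
    exact div_pos (hDpos x (hNS hx)) (by simpa using (mem_filter.mp hx).2)
  set P : Finset (Fin d) :=
    univ.filter fun i => ∑ x, D x * c i x ≠ b ∧ 0 < ∑ x, z x * c i x with hP
  set t₂ : ℝ := if hPne : P.Nonempty then
      P.inf' hPne (fun i => (b - ∑ x, D x * c i x) / (∑ x, z x * c i x)) else t₁ with ht₂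
  have ht₂pos : 0 < t₂ := by
    rw [ht₂]
    split
    · rename_i hPne
      rw [Finset.lt_inf'_iff]
      intro i hi
      obtain ⟨hib, hiz⟩ := (mem_filter.mp hi).2
      exact div_pos (sub_pos.mpr (lt_of_le_of_ne (hDc i) hib)) hiz
    · exact ht₁pos
  set ts : ℝ := min t₁ t₂ with hts
  have htpos : 0 < ts := lt_min ht₁pos ht₂pos
  set D' : X → ℝ := fun x => D x + ts * z x with hD'
  have hD'0 : ∀ x, 0 ≤ D' x := by
    intro x
    by_cases hx : x ∈ Sc
    · by_cases hzx : z x < 0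
      · have hxN : x ∈ N := mem_filter.mpr ⟨mem_univ x, hzx⟩
        have h1 : ts ≤ D x / (-z x) := le_trans (min_le_left _ _) (Finset.inf'_le _ hxN)
        have h2 : ts * (-z x) ≤ D x := by
          rw [← le_div_iff₀ (by simpa using hzx)]; exact h1
        simp only [hD']
        linarith
      · exact add_nonneg (hD0 x) (mul_nonneg htpos.le (not_lt.mp hzx))
    · simp only [hD', hzout x hx, mul_zero, add_zero]; exact hD0 x
  have hD'1 : ∑ x, D' x = 1 := by
    simp only [hD']
    rw [Finset.sum_add_distrib, ← Finset.mul_sum, hzsum, hD1]; ring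
  have hD'c : ∀ i, ∑ x, D' x * c i x ≤ b := by
    intro i
    simp only [hD']
    rw [lp_expand]
    by_cases hi : ∑ x, D x * c i x = b
    · rw [hzker i (mem_filter.mpr ⟨mem_univ i, hi⟩), hi]; simp
    · by_cases hzi : 0 < ∑ x, z x * c i x
      · have hiP : i ∈ P := mem_filter.mpr ⟨mem_univ i, hi, hzi⟩
        have h1 : ts ≤ (b - ∑ x, D x * c i x) / (∑ x, z x * c i x) := by
          refine le_trans (min_le_right _ _) ?_
          rw [ht₂, dif_pos ⟨i, hiP⟩]
          exact Finset.inf'_le _ hiP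
        have h2 : ts * (∑ x, z x * c i x) ≤ b - ∑ x, D x * c i x := by
          rw [← le_div_iff₀ hzi]; exact h1
        linarith
      · have h1 : ts * (∑ x, z x * c i x) ≤ 0 :=
          mul_nonpos_of_nonneg_of_nonpos htpos.le (not_lt.mp hzi)
        have := hDc i
        linarith
  have hD'r : ∑ x, D' x * r x = ∑ x, D x * r x := by
    simp only [hD']
    rw [lp_expand, hρ, mul_zero, add_zero]
  have hsupp : (univ.filter fun x => D' x ≠ 0) ⊆ Sc := by
    intro x hx
    rcases (mem_filter.mp hx) with ⟨_, hx2⟩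
    by_contra hxs
    apply hx2
    simp only [hD', hzout x hxs, mul_zero, add_zero]
    have : D x = 0 := by
      by_contra h
      exact hxs (mem_filter.mpr ⟨mem_univ x, h⟩)
    exact this
  have htight : Tt ⊆ (univ.filter fun i => ∑ x, D' x * c i x = b) := by
    intro i hi
    refine mem_filter.mpr ⟨mem_univ i, ?_⟩
    simp only [hD']
    rw [lp_expand, hzker i hi, mul_zero, add_zero]
    exact (mem_filter.mp hi).2
  refine ⟨D', hD'0, hD'1, hD'c, hD'r, ?_⟩
  rcases le_or_gt t₁ t₂ with hcase | hcase
  · -- a support element dies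
    left
    refine ⟨?_, htight⟩
    obtain ⟨xh, hxhN, hxheq⟩ := Finset.exists_mem_eq_inf' hNne (fun x => D x / (-z x))
    have hzxh : z xh < 0 := (mem_filter.mp hxhN).2
    have hxhSc : xh ∈ Sc := hNS hxhN
    have hD'xh : D' xh = 0 := by
      have hts : ts = D xh / (-z xh) := by rw [hts, min_eq_left hcase, ht₁, hxheq]
      have hz0 : -z xh ≠ 0 := ne_of_gt (neg_pos.mpr hzxh)
      simp only [hD', hts]
      field_simp
      rw [div_self (ne_of_lt hzxh)]; ring
    rw [Finset.ssubset_iff_of_subset hsupp]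
    exact ⟨xh, hxhSc, by simp [hD'xh]⟩
  · -- a new constraint becomes tight
    right
    refine ⟨hsupp, ?_⟩
    have hPne : P.Nonempty := by
      by_contra hPe
      rw [ht₂, dif_neg hPe] at hcase
      exact lt_irrefl _ hcase
    obtain ⟨ih, hihP, hiheq⟩ := Finset.exists_mem_eq_inf' hPne
      (fun i => (b - ∑ x, D x * c i x) / (∑ x, z x * c i x))
    obtain ⟨hihb, hihz⟩ := (mem_filter.mp hihP).2
    have htseq : ts = (b - ∑ x, D x * c ih x) / (∑ x, z x * c ih x) := by
      rw [hts, min_eq_right hcase.le, ht₂, dif_pos hPne, hiheq]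
    have hihnew : ∑ x, D' x * c ih x = b := by
      simp only [hD']
      rw [lp_expand, htseq]
      have hz0 : (∑ x, z x * c ih x) ≠ 0 := ne_of_gt hihz
      field_simp
      ring
    rw [Finset.ssubset_iff_of_subset htight]
    refine ⟨ih, mem_filter.mpr ⟨mem_univ ih, hihnew⟩, ?_⟩
    simp only [hTt, mem_filter, mem_univ, true_and]
    exact hihb

/-- Existence of a basic optimal solution: an optimizer with support of size at most `d`. -/
lemma lp_basic_opt {X : Type*} [Fintype X] {d : ℕ} (r : X → ℝ) (c : Fin d → X → ℝ)
    (b : ℝ) (hb : 0 < b) (i₀ : Fin d) (hi₀ : ∀ x, c i₀ x = b)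
    (x₀ : X) (hx₀ : ∀ i, c i x₀ ≤ b) :
    ∃ D : X → ℝ, (∀ x, 0 ≤ D x) ∧ (∑ x, D x = 1) ∧ (∀ i, ∑ x, D x * c i x ≤ b) ∧
      (univ.filter fun x => D x ≠ 0).card ≤ d ∧
      ∀ D' : X → ℝ, (∀ x, 0 ≤ D' x) → ∑ x, D' x = 1 →
        (∀ i, ∑ x, D' x * c i x ≤ b) → ∑ x, D' x * r x ≤ ∑ x, D x * r x := by
  classical
  set F : Set (X → ℝ) :=
    {D | (∀ x, 0 ≤ D x) ∧ (∑ x, D x = 1) ∧ ∀ i, ∑ x, D x * c i x ≤ b} with hF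
  have hδ : (fun x => if x = x₀ then (1:ℝ) else 0) ∈ F := by
    refine ⟨fun x => by positivity, by simp, ?_⟩
    intro i
    calc ∑ x, (if x = x₀ then (1:ℝ) else 0) * c i x
        = ∑ x, (if x = x₀ then c i x else 0) := by
          refine Finset.sum_congr rfl fun x _ => ?_
          split <;> simp
      _ = c i x₀ := by simp
      _ ≤ b := hx₀ i
  have hFc : IsCompact F := by
    have hsub : F ⊆ Set.Icc (0 : X → ℝ) 1 := by
      rintro D ⟨h0, h1, _⟩
      refine ⟨fun x => h0 x, fun x => ?_⟩
      calc D x ≤ ∑ y, D y := Finset.single_le_sum (fun y _ => h0 y) (mem_univ x)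
        _ = 1 := h1
    have hclosed : IsClosed F := by
      have hFeq : F = (⋂ x, {D : X → ℝ | 0 ≤ D x}) ∩
          ({D : X → ℝ | ∑ x, D x = 1} ∩ ⋂ i, {D : X → ℝ | ∑ x, D x * c i x ≤ b}) := by
        ext D
        simp only [hF, Set.mem_inter_iff, Set.mem_iInter, Set.mem_setOf_eq]
      rw [hFeq]
      exact (isClosed_iInter fun x => isClosed_le continuous_const (continuous_apply x)).inter
        ((isClosed_eq (continuous_finset_sum _ fun x _ => continuous_apply x)
            continuous_const).inter
          (isClosed_iInter fun i => isClosed_le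
            (continuous_finset_sum _ fun x _ => (continuous_apply x).mul continuous_const)
            continuous_const))
    exact IsCompact.of_isClosed_subset isCompact_Icc hclosed hsub
  obtain ⟨Dm, hDmF, hDmax⟩ := hFc.exists_isMaxOn ⟨_, hδ⟩
    (Continuous.continuousOn
      (continuous_finset_sum _ fun x _ => (continuous_apply x).mul continuous_const))
  set M := ∑ x, Dm x * r x with hM
  have hmax : ∀ D ∈ F, ∑ x, D x * r x ≤ M := fun D hD => hDmax hD
  set K := Fintype.card X with hK
  set g : (X → ℝ) → ℕ := fun D =>
    (d - (univ.filter fun i => ∑ x, D x * c i x = b).card) * (K + 1) +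
      (univ.filter fun x => D x ≠ 0).card with hg
  set G : Set ℕ := {n | ∃ D, (D ∈ F ∧ ∑ x, D x * r x = M) ∧ g D = n} with hG
  have hGne : G.Nonempty := ⟨g Dm, Dm, ⟨hDmF, rfl⟩, rfl⟩
  obtain ⟨D, ⟨hDF, hDM⟩, hgD⟩ := Nat.sInf_mem hGne
  have hmin : ∀ D', D' ∈ F → ∑ x, D' x * r x = M → g D ≤ g D' := by
    intro D' h1 h2
    rw [hgD]
    exact Nat.sInf_le ⟨D', ⟨h1, h2⟩, rfl⟩
  obtain ⟨hD0, hD1, hDc⟩ := hDF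
  have key1 : ∀ a a' s s' : ℕ, a' ≤ a → s' < s → a' * (K+1) + s' < a * (K+1) + s :=
    fun a a' s s' ha hs =>
      lt_of_le_of_lt (Nat.add_le_add_right (Nat.mul_le_mul_right _ ha) _)
        (Nat.add_lt_add_left hs _)
  have key2 : ∀ a a' s s' : ℕ, a' < a → s' ≤ K → a' * (K+1) + s' < a * (K+1) + s := by
    intro a a' s s' ha hs
    calc a' * (K+1) + s' < a' * (K+1) + (K+1) := by omega
      _ = (a' + 1) * (K+1) := by ring
      _ ≤ a * (K+1) := Nat.mul_le_mul_right _ ha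
      _ ≤ a * (K+1) + s := Nat.le_add_right _ _
  have hst : (univ.filter fun x => D x ≠ 0).card ≤
      (univ.filter fun i => ∑ x, D x * c i x = b).card := by
    by_contra hlt
    push_neg at hlt
    obtain ⟨D', h0, h1, hc', hr', hdisj⟩ := lp_exchange r c b hb i₀ hi₀ D hD0 hD1 hDc
      (fun D'' a1 a2 a3 => hDM ▸ hmax D'' ⟨a1, a2, a3⟩) hlt
    have hD'M : ∑ x, D' x * r x = M := by rw [hr', hDM]
    have hle := hmin D' ⟨h0, h1, hc'⟩ hD'M
    have hgt : g D' < g D := by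
      rcases hdisj with ⟨hss, hsub⟩ | ⟨hsub, hss⟩
      · refine key1 _ _ _ _ (Nat.sub_le_sub_left (Finset.card_le_card hsub) d)
          (Finset.card_lt_card hss)
      · refine key2 _ _ _ _ ?_ ?_
        · have h1' : (univ.filter fun i => ∑ x, D x * c i x = b).card <
              (univ.filter fun i => ∑ x, D' x * c i x = b).card := Finset.card_lt_card hss
          have h2' : (univ.filter fun i => ∑ x, D' x * c i x = b).card ≤ d := by
            calc (univ.filter fun i => ∑ x, D' x * c i x = b).card
                ≤ (univ : Finset (Fin d)).card := Finset.card_filter_le _ _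
              _ = d := by simp
          omega
        · calc (univ.filter fun x => D' x ≠ 0).card ≤ (univ : Finset X).card :=
              Finset.card_filter_le _ _
            _ = K := by simp [hK]
    omega
  have hcard : (univ.filter fun x => D x ≠ 0).card ≤ d := by
    refine le_trans hst ?_
    calc (univ.filter fun i => ∑ x, D x * c i x = b).card
        ≤ (univ : Finset (Fin d)).card := Finset.card_filter_le _ _
      _ = d := by simp
  exact ⟨D, hD0, hD1, hDc, hcard, fun D' a1 a2 a3 => hDM ▸ hmax D' ⟨a1, a2, a3⟩⟩

/-- Existence of an "LP-perfect" distribution: a distribution `D` attaining the LP optimum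
with `c_i(D) ≤ B/T` for every resource `i` and support of size at most `d`.
A null arm `x₀` (zero reward, zero consumption of every resource except time `i₀`) is available. -/
theorem exists_lp_perfect_distribution
    {X : Type*} [Fintype X] [Nonempty X] (d : ℕ)
    (r : X → ℝ) (c : Fin d → X → ℝ)
    (hr : ∀ x, r x ∈ Set.Icc (0:ℝ) 1) (hc : ∀ i x, c i x ∈ Set.Icc (0:ℝ) 1)
    (B T : ℝ) (hB : 0 < B) (hT : B ≤ T)
    (i₀ : Fin d) (hi₀ : ∀ x, c i₀ x = B / T)
    (x₀ : X) (hr₀ : r x₀ = 0) (hc₀ : ∀ i, i ≠ i₀ → c i x₀ = 0) :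
    ∃ D : X → ℝ, (∀ x, 0 ≤ D x) ∧ (∑ x, D x = 1) ∧
      ((∑ x, D x * r x) *
          Finset.univ.inf' ⟨i₀, Finset.mem_univ i₀⟩
            (fun i : Fin d =>
              if (∑ x, D x * c i x) = 0 then T else B / ∑ x, D x * c i x)
        = sSup {v : ℝ | ∃ D' : X → ℝ, (∀ x, 0 ≤ D' x) ∧ (∑ x, D' x = 1) ∧
            v = (∑ x, D' x * r x) *
              Finset.univ.inf' ⟨i₀, Finset.mem_univ i₀⟩
                (fun i : Fin d =>
                  if (∑ x, D' x * c i x) = 0 then T else B / ∑ x, D' x * c i x)}) ∧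
      (∀ i, ∑ x, D x * c i x ≤ B / T) ∧
      Set.ncard {x | D x ≠ 0} ≤ d := by
  classical
  have hTpos : 0 < T := lt_of_lt_of_le hB hT
  have hbpos : 0 < B / T := div_pos hB hTpos
  have hBT : B / (B / T) = T := by field_simp
  have hx₀ : ∀ i, c i x₀ ≤ B / T := by
    intro i
    by_cases h : i = i₀
    · rw [h, hi₀]
    · rw [hc₀ i h]; exact hbpos.le
  obtain ⟨D, hD0, hD1, hDc, hcard, hopt⟩ := lp_basic_opt r c (B/T) hbpos i₀ hi₀ x₀ hx₀
  have hsnn : ∀ (D' : X → ℝ), (∀ x, 0 ≤ D' x) → ∀ i, 0 ≤ ∑ x, D' x * c i x :=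
    fun D' h0 i => Finset.sum_nonneg fun x _ => mul_nonneg (h0 x) (hc i x).1
  have hsi₀ : ∀ (D' : X → ℝ), ∑ x, D' x = 1 → ∑ x, D' x * c i₀ x = B / T := by
    intro D' h1
    simp only [hi₀, ← Finset.sum_mul, h1, one_mul]
  have hinfD : univ.inf' ⟨i₀, mem_univ i₀⟩
      (fun i => if (∑ x, D x * c i x) = 0 then T else B / ∑ x, D x * c i x) = T := by
    apply le_antisymm
    · have h := Finset.inf'_le
        (fun i => if (∑ x, D x * c i x) = 0 then T else B / ∑ x, D x * c i x) (mem_univ i₀)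
      rwa [if_neg (by rw [hsi₀ D hD1]; exact ne_of_gt hbpos), hsi₀ D hD1, hBT] at h
    · refine (Finset.le_inf'_iff _ _).2 ?_
      intro i _
      by_cases h : (∑ x, D x * c i x) = 0
      · rw [if_pos h]
      · rw [if_neg h]
        have hpos : 0 < ∑ x, D x * c i x := lt_of_le_of_ne (hsnn D hD0 i) (Ne.symm h)
        calc T = B / (B/T) := hBT.symm
          _ ≤ B / ∑ x, D x * c i x :=
            (div_le_div_iff_of_pos_left hB hbpos hpos).mpr (hDc i)
  have hub : ∀ v ∈ {v : ℝ | ∃ D' : X → ℝ, (∀ x, 0 ≤ D' x) ∧ (∑ x, D' x = 1) ∧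
      v = (∑ x, D' x * r x) *
        Finset.univ.inf' ⟨i₀, Finset.mem_univ i₀⟩
          (fun i : Fin d =>
            if (∑ x, D' x * c i x) = 0 then T else B / ∑ x, D' x * c i x)},
      v ≤ (∑ x, D x * r x) * T := by
    rintro v ⟨D', h0, h1, hv⟩
    set m := univ.inf' ⟨i₀, mem_univ i₀⟩
      (fun i => if (∑ x, D' x * c i x) = 0 then T else B / ∑ x, D' x * c i x) with hm
    have hmT : m ≤ T := by
      have h := Finset.inf'_le
        (fun i => if (∑ x, D' x * c i x) = 0 then T else B / ∑ x, D' x * c i x) (mem_univ i₀)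
      rw [if_neg (by rw [hsi₀ D' h1]; exact ne_of_gt hbpos), hsi₀ D' h1, hBT] at h
      exact hm ▸ h
    have hmpos : 0 < m := by
      rw [hm]; refine (Finset.lt_inf'_iff _).2 ?_
      intro i _
      by_cases h : (∑ x, D' x * c i x) = 0
      · rw [if_pos h]; exact hTpos
      · rw [if_neg h]
        exact div_pos hB (lt_of_le_of_ne (hsnn D' h0 i) (Ne.symm h))
    set lam := m / T with hlam
    have hlam0 : 0 < lam := div_pos hmpos hTpos
    have hlam1 : lam ≤ 1 := by rw [hlam, div_le_one hTpos]; exact hmT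
    set D'' : X → ℝ := fun x => lam * D' x + (1 - lam) * (if x = x₀ then 1 else 0) with hD''
    have hδsum : ∀ f : X → ℝ, ∑ x, (if x = x₀ then (1:ℝ) else 0) * f x = f x₀ := by
      intro f
      calc ∑ x, (if x = x₀ then (1:ℝ) else 0) * f x
          = ∑ x, (if x = x₀ then f x else 0) := by
            refine Finset.sum_congr rfl fun x _ => ?_
            split <;> simp
        _ = f x₀ := by simp
    have hexp : ∀ f : X → ℝ, ∑ x, D'' x * f x = lam * (∑ x, D' x * f x) + (1 - lam) * f x₀ := by
      intro f
      simp only [hD'', add_mul]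
      rw [Finset.sum_add_distrib, ← hδsum f]
      simp [Finset.mul_sum, mul_assoc]
    have h''0 : ∀ x, 0 ≤ D'' x := by
      intro x
      refine add_nonneg (mul_nonneg hlam0.le (h0 x)) (mul_nonneg (by linarith) ?_)
      split <;> norm_num
    have h''1 : ∑ x, D'' x = 1 := by
      have e := hexp (fun _ => (1:ℝ))
      simp only [mul_one] at e
      calc ∑ x, D'' x = ∑ x, D'' x * (1:ℝ) := by simp
        _ = lam * (∑ x, D' x * (1:ℝ)) + (1 - lam) := by
            simpa using hexp (fun _ => (1:ℝ))
        _ = 1 := by simp [h1]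
    have h''c : ∀ i, ∑ x, D'' x * c i x ≤ B / T := by
      intro i
      rw [hexp (c i)]
      by_cases h : i = i₀
      · subst h
        rw [hsi₀ D' h1, hi₀]
        exact le_of_eq (by ring)
      · rw [hc₀ i h, mul_zero, add_zero]
        by_cases hs : (∑ x, D' x * c i x) = 0
        · rw [hs, mul_zero]; exact hbpos.le
        · have hpos : 0 < ∑ x, D' x * c i x := lt_of_le_of_ne (hsnn D' h0 i) (Ne.symm hs)
          have hmle : m ≤ B / ∑ x, D' x * c i x := by
            have h2 := Finset.inf'_le
              (fun i => if (∑ x, D' x * c i x) = 0 then T else B / ∑ x, D' x * c i x)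
              (mem_univ i)
            rw [if_neg hs] at h2
            exact hm ▸ h2
          have h2 : m * (∑ x, D' x * c i x) ≤ B := by
            rw [← le_div_iff₀ hpos]; exact hmle
          calc lam * (∑ x, D' x * c i x) = (m * (∑ x, D' x * c i x)) / T := by
                rw [hlam]; ring
            _ ≤ B / T := (div_le_div_iff_of_pos_right hTpos).mpr h2
    have hle := hopt D'' h''0 h''1 h''c
    have h''r : ∑ x, D'' x * r x = lam * (∑ x, D' x * r x) := by
      rw [hexp r, hr₀, mul_zero, add_zero]
    rw [h''r] at hle
    rw [hv]
    calc (∑ x, D' x * r x) * m = (lam * (∑ x, D' x * r x)) * T := by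
          rw [hlam]
          field_simp
      _ ≤ (∑ x, D x * r x) * T := mul_le_mul_of_nonneg_right hle hTpos.le
  have hgreat : IsGreatest {v : ℝ | ∃ D' : X → ℝ, (∀ x, 0 ≤ D' x) ∧ (∑ x, D' x = 1) ∧
      v = (∑ x, D' x * r x) *
        Finset.univ.inf' ⟨i₀, Finset.mem_univ i₀⟩
          (fun i : Fin d =>
            if (∑ x, D' x * c i x) = 0 then T else B / ∑ x, D' x * c i x)}
      ((∑ x, D x * r x) * T) :=
    ⟨⟨D, hD0, hD1, by rw [hinfD]⟩, hub⟩
  refine ⟨D, hD0, hD1, ?_, hDc, ?_⟩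
  · rw [hinfD]
    exact (hgreat.csSup_eq).symm
  · have hset : {x | D x ≠ 0} = ↑(univ.filter fun x => D x ≠ 0) := by ext x; simp
    rw [hset, Set.ncard_coe_finset]
    exact hcard
end
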